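/- For every integer p ≥ 2: 𝒜_{1,2}(p) ≤ 2^{p−5}·(p² + 8p), where 𝒜_{1,2}(p) := Σ 1_{[l₁+⋯+l_{q−1} ≤ p/2 − q]}·1_{[l_q+⋯+l_{q+t} ≤ (p − t − 1_{[t>0]})/2 − 1]}, the sum running over all integers k, q, t with 2 ≤ k ≤ p−1, 1 ≤ q ≤ k, 0 ≤ t ≤ k−q, and all tuples (l₁,…,l_k) of nonnegative integers with l₁+⋯+l_k = p−1−k (empty sums of the l_i being 0, and the inequalities inside the indicators read as inequalities of rationals). -/

import Mathlib

open Finset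

lemma adt_succ (k n : ℕ) :
    Finset.Nat.antidiagonalTuple (k+1) n =
      (Finset.range (n+1)).biUnion
        (fun a => (Finset.Nat.antidiagonalTuple k (n - a)).map
          ⟨Fin.cons a, Fin.cons_right_injective (α := fun _ => ℕ) a⟩) := by
  ext x
  simp only [Finset.Nat.mem_antidiagonalTuple, Finset.mem_biUnion, Finset.mem_range,
    Finset.mem_map, Function.Embedding.coeFn_mk]
  constructor
  · intro hx
    rw [Fin.sum_univ_succ] at hx
    refine ⟨x 0, by omega, Fin.tail x, ?_, Fin.cons_self_tail x⟩
    show ∑ i : Fin k, x i.succ = n - x 0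
    omega
  · rintro ⟨a, ha, y, hy, rfl⟩
    rw [Fin.sum_univ_succ]
    simp only [Fin.cons_zero, Fin.cons_succ]
    omega

lemma adt_card_succ (k n : ℕ) :
    (Finset.Nat.antidiagonalTuple (k+1) n).card
      = ∑ a ∈ Finset.range (n+1), (Finset.Nat.antidiagonalTuple k (n - a)).card := by
  rw [adt_succ, Finset.card_biUnion]
  · simp
  · intro a _ b _ hab
    simp only [Finset.disjoint_left]
    intro x hx hx'
    simp only [Finset.mem_map, Function.Embedding.coeFn_mk] at hx hx'
    obtain ⟨y, _, rfl⟩ := hx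
    obtain ⟨z, _, hz⟩ := hx'
    apply hab
    have h0 := congrFun hz 0
    simpa using h0.symm

lemma adt_card (k n : ℕ) :
    (Finset.Nat.antidiagonalTuple (k+1) n).card = (n + k).choose k := by
  induction k generalizing n with
  | zero => simp [Finset.Nat.antidiagonalTuple_one]
  | succ k ih =>
    rw [adt_card_succ]
    simp only [ih]
    rw [show (∑ a ∈ Finset.range (n+1), (n - a + k).choose k)
        = ∑ a ∈ Finset.range (n+1), ((n + 1 - 1 - a + k).choose k) by rfl,
      Finset.sum_range_reflect (fun a => (a + k).choose k) (n+1)]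
    have h := Nat.sum_Icc_choose (n + k) k
    rw [show n + (k+1) = n + k + 1 by omega, ← h]
    refine Finset.sum_nbij' (fun i => i + k) (fun m => m - k) ?_ ?_ ?_ ?_ ?_
    · intro a ha; simp only [Finset.mem_range] at ha; simp only [Finset.mem_Icc]; omega
    · intro m hm; simp only [Finset.mem_Icc] at hm; simp only [Finset.mem_range]; omega
    · intro a ha; show a + k - k = a; omega
    · intro m hm; simp only [Finset.mem_Icc] at hm; show m - k + k = m; omega
    · intro a ha; rfl

lemma pascal_sum (f : ℕ → ℕ) (n : ℕ) :
    ∑ j ∈ Finset.range (n+2), f j * (n+1).choose j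
      = ∑ j ∈ Finset.range (n+1), f j * n.choose j
        + ∑ j ∈ Finset.range (n+1), f (j+1) * n.choose j := by
  rw [Finset.sum_range_succ' (fun j => f j * (n+1).choose j) (n+1)]
  simp only [Nat.choose_succ_succ, Nat.mul_add]
  rw [Finset.sum_add_distrib]
  rw [Finset.sum_range_succ (fun j => f (j+1) * n.choose (j+1)) n]
  rw [Nat.choose_succ_self, Nat.mul_zero, Nat.add_zero]
  rw [Finset.sum_range_succ' (fun j => f j * n.choose j) n]
  simp [Nat.choose_zero_right]
  omega

lemma sum_quad_choose (n : ℕ) : ∀ a : ℕ,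
    4 * ∑ j ∈ Finset.range (n+1), (j+a)*(j+a+1)*n.choose j
      = 2^n * (n^2 + (4*a+3)*n + 4*a^2+4*a) := by
  induction n with
  | zero => intro a; simp; ring
  | succ n ih =>
    intro a
    rw [pascal_sum (fun j => (j+a)*(j+a+1)) n, Nat.mul_add, ih a]
    have key : ∑ j ∈ Finset.range (n+1), ((j+1)+a)*((j+1)+a+1)*n.choose j
        = ∑ j ∈ Finset.range (n+1), (j+(a+1))*(j+(a+1)+1)*n.choose j := by
      apply Finset.sum_congr rfl; intro j _; ring_nf
    rw [key, ih (a+1)]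
    ring

lemma gauss_icc (k : ℕ) : 2 * ∑ q ∈ Finset.Icc 1 k, (k - q + 1) = k * (k+1) := by
  induction k with
  | zero => simp
  | succ k ih =>
    rw [Finset.sum_Icc_succ_top (by omega : 1 ≤ k + 1)]
    have h1 : ∀ q ∈ Finset.Icc 1 k, k+1-q+1 = (k-q+1)+1 := by
      intro q hq; simp only [Finset.mem_Icc] at hq; omega
    rw [Finset.sum_congr rfl h1, Finset.sum_add_distrib, Finset.sum_const, Nat.card_Icc,
      smul_eq_mul, mul_one]
    ring_nf
    ring_nf at ih
    omega
  
lemma count_bound (p : ℕ) (hp : 2 ≤ p) :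
    32 * ∑ k ∈ Finset.Icc 2 (p-1), ∑ q ∈ Finset.Icc 1 k, ∑ t ∈ Finset.range (k-q+1),
        (Finset.Nat.antidiagonalTuple k (p-1-k)).card
      ≤ 2^p * (p^2 + 8*p) := by
  obtain ⟨m, rfl⟩ : ∃ m, p = m + 2 := ⟨p - 2, by omega⟩
  simp only [show m + 2 - 1 = m + 1 from rfl]
  have hS : 2 * ∑ k ∈ Finset.Icc 2 (m+1), ∑ q ∈ Finset.Icc 1 k, ∑ t ∈ Finset.range (k-q+1),
        (Finset.Nat.antidiagonalTuple k (m+1-k)).card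
      = ∑ k ∈ Finset.Icc 2 (m+1), (k*(k+1)) * m.choose (k-1) := by
    rw [Finset.mul_sum]
    apply Finset.sum_congr rfl
    intro k hk
    simp only [Finset.mem_Icc] at hk
    obtain ⟨j, rfl⟩ : ∃ j, k = j + 1 := ⟨k - 1, by omega⟩
    have hcard : (Finset.Nat.antidiagonalTuple (j+1) (m+1-(j+1))).card = m.choose j := by
      rw [adt_card]
      congr 1
      omega
    simp only [Finset.sum_const, Finset.card_range, smul_eq_mul, hcard]
    rw [← Finset.sum_mul, ← mul_assoc, gauss_icc]
    simp
  have hmono : ∑ k ∈ Finset.Icc 2 (m+1), (k*(k+1)) * m.choose (k-1)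
      ≤ ∑ j ∈ Finset.range (m+1), (j+1)*(j+2) * m.choose j := by
    have : ∑ j ∈ Finset.range (m+1), (j+1)*(j+2) * m.choose j
        = ∑ k ∈ Finset.Icc 1 (m+1), (k*(k+1)) * m.choose (k-1) := by
      refine Finset.sum_nbij' (fun j => j + 1) (fun k => k - 1) ?_ ?_ ?_ ?_ ?_
      · intro j hj; simp only [Finset.mem_range] at hj; simp only [Finset.mem_Icc]; omega
      · intro k hk; simp only [Finset.mem_Icc] at hk; simp only [Finset.mem_range]; omega
      · intro j hj; show j + 1 - 1 = j; omega
      · intro k hk; simp only [Finset.mem_Icc] at hk; show k - 1 + 1 = k; omega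
      · intro j hj; simp only [Nat.add_sub_cancel]
    rw [this]
    apply Finset.sum_le_sum_of_subset
    intro x hx; simp only [Finset.mem_Icc] at hx ⊢; omega
  have hquad : 4 * ∑ j ∈ Finset.range (m+1), (j+1)*(j+2) * m.choose j
      = 2^m * (m^2 + 7*m + 8) := by
    have h := sum_quad_choose m 1
    have e1 : ∑ j ∈ Finset.range (m+1), (j+1)*(j+2) * m.choose j
        = ∑ j ∈ Finset.range (m+1), (j+1)*(j+1+1) * m.choose j := by
      apply Finset.sum_congr rfl; intro j _; norm_num
    rw [e1, h]
    ring
  have hfin : 2^m * (m^2 + 7*m + 8) * 4 ≤ 2^(m+2) * ((m+2)^2 + 8*(m+2)) := by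
    have h1 : 2^(m+2) = 2^m * 4 := by ring
    have h2 : m^2 + 7*m+8 ≤ (m+2)^2 + 8*(m+2) := by nlinarith
    calc 2^m * (m^2+7*m+8) * 4 = 2^m * 4 * (m^2+7*m+8) := by ring
      _ ≤ 2^m * 4 * ((m+2)^2 + 8*(m+2)) := Nat.mul_le_mul_left _ h2
      _ = 2^(m+2) * ((m+2)^2 + 8*(m+2)) := by rw [h1]
  linarith

/-- `𝒜_{1,2}(p)`: the sum of
`1_{[l₁+⋯+l_{q−1} ≤ p/2 − q]}·1_{[l_q+⋯+l_{q+t} ≤ (p − t − 1_{[t>0]})/2 − 1]}` over all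
integers `k, q, t` with `2 ≤ k ≤ p−1`, `1 ≤ q ≤ k`, `0 ≤ t ≤ k−q`, and all tuples
`(l₁,…,l_k)` of nonnegative integers with `l₁+⋯+l_k = p−1−k`. -/
noncomputable def A12 (p : ℕ) : ℚ :=
  ∑ k ∈ Finset.Icc 2 (p - 1), ∑ q ∈ Finset.Icc 1 k, ∑ t ∈ Finset.range (k - q + 1),
    ∑ l ∈ Finset.Nat.antidiagonalTuple k (p - 1 - k),
      (if ((∑ i : Fin k, if (i : ℕ) < q - 1 then (l i : ℚ) else 0) ≤
            (p : ℚ) / 2 - (q : ℚ)) then 1 else 0) *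
      (if ((∑ i : Fin k, if q - 1 ≤ (i : ℕ) ∧ (i : ℕ) < q + t then (l i : ℚ) else 0) ≤
            ((p : ℚ) - (t : ℚ) - (if 0 < t then 1 else 0)) / 2 - 1) then 1 else 0)

/-- For every integer `p ≥ 2`: `𝒜_{1,2}(p) ≤ 2^{p−5}·(p² + 8p)`. -/
theorem A12_bound (p : ℕ) (hp : 2 ≤ p) :
    A12 p ≤ (2 : ℚ) ^ ((p : ℤ) - 5) * ((p : ℚ) ^ 2 + 8 * (p : ℚ)) := by
  have h1 : A12 p ≤ ((∑ k ∈ Finset.Icc 2 (p-1), ∑ q ∈ Finset.Icc 1 k,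
      ∑ t ∈ Finset.range (k-q+1), (Finset.Nat.antidiagonalTuple k (p-1-k)).card : ℕ) : ℚ) := by
    rw [A12]
    push_cast
    refine Finset.sum_le_sum fun k _ => Finset.sum_le_sum fun q _ =>
      Finset.sum_le_sum fun t _ => ?_
    calc ∑ l ∈ Finset.Nat.antidiagonalTuple k (p - 1 - k),
          ((if ((∑ i : Fin k, if (i : ℕ) < q - 1 then (l i : ℚ) else 0) ≤
            (p : ℚ) / 2 - (q : ℚ)) then 1 else 0) *
          (if ((∑ i : Fin k, if q - 1 ≤ (i : ℕ) ∧ (i : ℕ) < q + t then (l i : ℚ) else 0) ≤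
            ((p : ℚ) - (t : ℚ) - (if 0 < t then 1 else 0)) / 2 - 1) then 1 else 0))
        ≤ ∑ l ∈ Finset.Nat.antidiagonalTuple k (p - 1 - k), (1 : ℚ) := by
          refine Finset.sum_le_sum fun l _ => ?_
          split_ifs <;> norm_num
      _ = ((Finset.Nat.antidiagonalTuple k (p - 1 - k)).card : ℚ) := by
          rw [Finset.sum_const, nsmul_eq_mul, mul_one]
  have h2 := count_bound p hp
  have h2q : (32 : ℚ) * (∑ k ∈ Finset.Icc 2 (p-1), ∑ q ∈ Finset.Icc 1 k,
      ∑ t ∈ Finset.range (k-q+1), (Finset.Nat.antidiagonalTuple k (p-1-k)).card : ℕ)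
      ≤ (2:ℚ)^p * ((p:ℚ)^2 + 8*p) := by exact_mod_cast h2
  have hz : (2:ℚ) ^ ((p : ℤ) - 5) = (2:ℚ)^p / 32 := by
    rw [zpow_sub₀ (by norm_num : (2:ℚ) ≠ 0), zpow_natCast]
    norm_num
  rw [hz]
  have hpos : (0:ℚ) ≤ (p:ℚ)^2 + 8*p := by positivity
  nlinarith [h1, h2q]
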